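/- For μ > 0 and x > 0, the series e^{-x} Σ_{n=0}^∞ (x^n/n!) Q_{μ+n}(y) with Q_a(y) = Γ(a,y)/Γ(a) converges and equals the generalized Marcum Q-function Q_μ(x,y); moreover each partial sum is bounded above by 1. -/

import Mathlib

open Real MeasureTheory

/-- Modified Bessel function of the first kind `I_ν(z)` via its Maclaurin series. -/
noncomputable def besselI (ν z : ℝ) : ℝ :=
  (z / 2) ^ ν * ∑' n : ℕ, (z ^ 2 / 4) ^ n / (n.factorial * Real.Gamma (ν + n + 1))

/-- Upper incomplete gamma function `Γ(a, y)`. -/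
noncomputable def uGamma (a y : ℝ) : ℝ := ∫ t in Set.Ioi y, t ^ (a - 1) * Real.exp (-t)

/-- Regularized upper incomplete gamma function `Q_a(y) = Γ(a,y)/Γ(a)`. -/
noncomputable def regQ (a y : ℝ) : ℝ := uGamma a y / Real.Gamma a

/-- η-th moment of the partial non-central chi-squared distribution (Nuttall Q-function). -/
noncomputable def nuttallQ (η μ x y : ℝ) : ℝ :=
  x ^ ((1 - μ) / 2) *
    ∫ t in Set.Ioi y, t ^ (η + (μ - 1) / 2) * Real.exp (-t - x) *
      besselI (μ - 1) (2 * Real.sqrt (x * t))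

/-- Generalized Marcum Q-function. -/
noncomputable def marcumQ (μ x y : ℝ) : ℝ := nuttallQ 0 μ x y

/-- Complementary Marcum function `P_μ(x,y)`. -/
noncomputable def marcumP (μ x y : ℝ) : ℝ :=
  x ^ ((1 - μ) / 2) *
    ∫ t in Set.Ioc 0 y, t ^ ((μ - 1) / 2) * Real.exp (-t - x) *
      besselI (μ - 1) (2 * Real.sqrt (x * t))

private lemma uGamma_integrableOn {a y : ℝ} (ha : 0 < a) (hy : 0 ≤ y) :
    IntegrableOn (fun t : ℝ => t ^ (a - 1) * Real.exp (-t)) (Set.Ioi y) := by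
  have h2 : IntegrableOn (fun t : ℝ => t ^ (a - 1) * Real.exp (-t)) (Set.Ioi 0) := by
    simpa [mul_comm] using Real.GammaIntegral_convergent ha
  exact h2.mono_set (Set.Ioi_subset_Ioi hy)

private lemma uGamma_nonneg {a y : ℝ} (hy : 0 ≤ y) : 0 ≤ uGamma a y := by
  refine setIntegral_nonneg measurableSet_Ioi fun t ht => ?_
  have ht0 : 0 ≤ t := le_of_lt (lt_of_le_of_lt hy ht)
  positivity

private lemma uGamma_le_Gamma {a y : ℝ} (ha : 0 < a) (hy : 0 ≤ y) :
    uGamma a y ≤ Real.Gamma a := by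
  have hG : Real.Gamma a = ∫ t in Set.Ioi (0:ℝ), t ^ (a - 1) * Real.exp (-t) := by
    rw [Real.Gamma_eq_integral ha]
    exact setIntegral_congr_fun measurableSet_Ioi fun t _ => mul_comm _ _
  rw [uGamma, hG]
  refine setIntegral_mono_set (uGamma_integrableOn ha le_rfl) ?_
    (Filter.Eventually.of_forall (Set.Ioi_subset_Ioi hy))
  filter_upwards [ae_restrict_mem measurableSet_Ioi] with t ht
  have ht0 : (0:ℝ) ≤ t := le_of_lt ht
  positivity

private lemma key_pointwise {μ x : ℝ} (hx : 0 < x) {t : ℝ} (ht : 0 < t) :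
    x ^ ((1 - μ) / 2) * (t ^ ((μ - 1) / 2) * Real.exp (-t - x) *
      besselI (μ - 1) (2 * Real.sqrt (x * t))) =
    ∑' n : ℕ, Real.exp (-x) * (x ^ n / n.factorial) / Real.Gamma (μ + n) *
      (t ^ (μ + n - 1) * Real.exp (-t)) := by
  have hxt : 0 < x * t := mul_pos hx ht
  have h1 : (2 * Real.sqrt (x * t)) / 2 = Real.sqrt (x * t) := by ring
  have h2 : (2 * Real.sqrt (x * t)) ^ 2 / 4 = x * t := by
    rw [mul_pow, Real.sq_sqrt hxt.le]; ring
  rw [besselI, h1, h2]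
  have hs : Real.sqrt (x * t) ^ (μ - 1) = x ^ ((μ - 1) / 2) * t ^ ((μ - 1) / 2) := by
    rw [Real.sqrt_eq_rpow, ← Real.rpow_mul hxt.le,
      show (1/2 : ℝ) * (μ - 1) = (μ - 1)/2 by ring, Real.mul_rpow hx.le ht.le]
  rw [hs]
  have hxx : x ^ ((1 - μ)/2) * x ^ ((μ - 1)/2) = 1 := by
    rw [← Real.rpow_add hx, show (1 - μ)/2 + (μ - 1)/2 = 0 by ring, Real.rpow_zero]
  have htt : t ^ ((μ - 1)/2) * t ^ ((μ - 1)/2) = t ^ (μ - 1) := by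
    rw [← Real.rpow_add ht, show (μ - 1)/2 + (μ - 1)/2 = μ - 1 by ring]
  calc x ^ ((1 - μ) / 2) * (t ^ ((μ - 1) / 2) * Real.exp (-t - x) *
        (x ^ ((μ - 1)/2) * t ^ ((μ - 1)/2) *
          ∑' n : ℕ, (x * t) ^ n / (n.factorial * Real.Gamma (μ - 1 + n + 1))))
      = (x ^ ((1 - μ)/2) * x ^ ((μ - 1)/2)) *
          ((t ^ ((μ - 1)/2) * t ^ ((μ - 1)/2)) * Real.exp (-t - x) *
            ∑' n : ℕ, (x * t) ^ n / (n.factorial * Real.Gamma (μ - 1 + n + 1))) := by ring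
    _ = (t ^ (μ - 1) * Real.exp (-t - x)) *
          ∑' n : ℕ, (x * t) ^ n / (n.factorial * Real.Gamma (μ - 1 + n + 1)) := by
        rw [hxx, htt, one_mul]
    _ = ∑' n : ℕ, (t ^ (μ - 1) * Real.exp (-t - x)) *
          ((x * t) ^ n / (n.factorial * Real.Gamma (μ - 1 + n + 1))) := (tsum_mul_left).symm
    _ = _ := by
        refine tsum_congr fun n => ?_
        have htn : t ^ (μ + (n:ℝ) - 1) = t ^ (μ - 1) * t ^ (n:ℕ) := by
          rw [← Real.rpow_natCast t n, ← Real.rpow_add ht]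
          congr 1; ring
        rw [show μ - 1 + (n:ℝ) + 1 = μ + (n:ℝ) by ring, mul_pow, htn,
          show -t - x = -t + -x by ring, Real.exp_add]
        ring

theorem marcumQ_series_regQ (μ x y : ℝ) (hμ : 0 < μ) (hx : 0 < x) (hy : 0 ≤ y) :
    HasSum (fun n : ℕ => Real.exp (-x) * (x ^ n / n.factorial) * regQ (μ + n) y)
        (marcumQ μ x y) ∧
      ∀ N : ℕ,
        ∑ n ∈ Finset.range N, Real.exp (-x) * (x ^ n / n.factorial) * regQ (μ + n) y ≤ 1 := by
  have hμn : ∀ n : ℕ, (0:ℝ) < μ + n := fun n => by positivity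
  have hGpos : ∀ n : ℕ, 0 < Real.Gamma (μ + n) := fun n => Real.Gamma_pos_of_pos (hμn n)
  set F : ℕ → ℝ → ℝ := fun n t =>
    Real.exp (-x) * (x ^ n / n.factorial) / Real.Gamma (μ + n) *
      (t ^ (μ + n - 1) * Real.exp (-t)) with hF
  have hint : ∀ n : ℕ, IntegrableOn (fun t : ℝ => t ^ (μ + (n:ℝ) - 1) * Real.exp (-t))
      (Set.Ioi y) := fun n => uGamma_integrableOn (hμn n) hy
  have hFint : ∀ n, IntegrableOn (F n) (Set.Ioi y) := fun n => (hint n).const_mul _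
  have hFnonneg : ∀ n : ℕ, ∀ t ∈ Set.Ioi y, 0 ≤ F n t := by
    intro n t ht
    have ht0 : 0 < t := lt_of_le_of_lt hy ht
    have := (hGpos n).le
    simp only [hF]
    positivity
  have hreg0 : ∀ n : ℕ, 0 ≤ regQ (μ + n) y := fun n =>
    div_nonneg (uGamma_nonneg hy) (hGpos n).le
  have hreg1 : ∀ n : ℕ, regQ (μ + n) y ≤ 1 := fun n =>
    (div_le_one (hGpos n)).2 (uGamma_le_Gamma (hμn n) hy)
  have hb : ∀ n : ℕ, 0 ≤ Real.exp (-x) * (x ^ n / n.factorial) := fun n => by positivity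
  have hInt_eq : ∀ n : ℕ, ∫ t in Set.Ioi y, F n t =
      Real.exp (-x) * (x ^ n / n.factorial) * regQ (μ + n) y := by
    intro n
    rw [hF]
    rw [integral_const_mul]
    have : ∫ t in Set.Ioi y, t ^ (μ + (n:ℝ) - 1) * Real.exp (-t) = uGamma (μ + n) y := rfl
    rw [this, regQ]
    ring
  have hterm_le : ∀ n : ℕ, Real.exp (-x) * (x ^ n / n.factorial) * regQ (μ + n) y ≤
      Real.exp (-x) * (x ^ n / n.factorial) :=
    fun n => mul_le_of_le_one_right (hb n) (hreg1 n)
  have hterm_nn : ∀ n : ℕ, 0 ≤ Real.exp (-x) * (x ^ n / n.factorial) * regQ (μ + n) y :=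
    fun n => mul_nonneg (hb n) (hreg0 n)
  have hbsumm : Summable fun n : ℕ => Real.exp (-x) * (x ^ n / n.factorial) :=
    (Real.summable_pow_div_factorial x).mul_left _
  have hsummable : Summable fun n : ℕ =>
      Real.exp (-x) * (x ^ n / n.factorial) * regQ (μ + n) y :=
    Summable.of_nonneg_of_le hterm_nn hterm_le hbsumm
  constructor
  · -- the HasSum part
    have hnn_ae : ∀ n : ℕ, 0 ≤ᵐ[volume.restrict (Set.Ioi y)] F n := fun n =>
      (ae_restrict_iff' measurableSet_Ioi).2 (Filter.Eventually.of_forall fun t ht =>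
        hFnonneg n t ht)
    have hlint : ∀ n : ℕ, ∫⁻ t, ‖F n t‖₊ ∂(volume.restrict (Set.Ioi y)) =
        ENNReal.ofReal (∫ t in Set.Ioi y, F n t) := by
      intro n
      rw [ofReal_integral_eq_lintegral_ofReal (hFint n) (hnn_ae n)]
      refine lintegral_congr_ae ?_
      filter_upwards [hnn_ae n] with t ht
      exact Real.enorm_eq_ofReal ht
    have hfin : (∑' n : ℕ, ∫⁻ t, ‖F n t‖₊ ∂(volume.restrict (Set.Ioi y))) ≠ ⊤ := by
      have hle : (∑' n : ℕ, ∫⁻ t, ‖F n t‖₊ ∂(volume.restrict (Set.Ioi y))) ≤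
          ∑' n : ℕ, ENNReal.ofReal (Real.exp (-x) * (x ^ n / n.factorial)) := by
        refine ENNReal.tsum_le_tsum fun n => ?_
        rw [hlint n, hInt_eq n]
        exact ENNReal.ofReal_le_ofReal (hterm_le n)
      refine ne_top_of_le_ne_top ?_ hle
      rw [← ENNReal.ofReal_tsum_of_nonneg hb hbsumm]
      exact ENNReal.ofReal_ne_top
    have hswap : ∫ t in Set.Ioi y, ∑' n : ℕ, F n t = ∑' n : ℕ, ∫ t in Set.Ioi y, F n t :=
      integral_tsum (fun n => (hFint n).aestronglyMeasurable) hfin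
    have hmar : marcumQ μ x y = ∫ t in Set.Ioi y, ∑' n : ℕ, F n t := by
      rw [marcumQ, nuttallQ, ← integral_const_mul]
      refine setIntegral_congr_fun measurableSet_Ioi fun t ht => ?_
      have ht0 : 0 < t := lt_of_le_of_lt hy ht
      simpa [zero_add] using key_pointwise hx ht0
    refine hsummable.hasSum_iff.2 ?_
    rw [hmar, hswap]
    exact tsum_congr fun n => (hInt_eq n).symm
  · -- partial sums bounded by 1
    intro N
    calc ∑ n ∈ Finset.range N, Real.exp (-x) * (x ^ n / n.factorial) * regQ (μ + n) y
        ≤ ∑ n ∈ Finset.range N, Real.exp (-x) * (x ^ n / n.factorial) :=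
          Finset.sum_le_sum fun n _ => hterm_le n
      _ = Real.exp (-x) * ∑ n ∈ Finset.range N, x ^ n / n.factorial := by
          rw [Finset.mul_sum]
      _ ≤ Real.exp (-x) * Real.exp x :=
          mul_le_mul_of_nonneg_left (Real.sum_le_exp_of_nonneg hx.le N) (Real.exp_nonneg _)
      _ = 1 := by rw [← Real.exp_add]; norm_num
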